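/- The Boltzmann maximizer is unique: with B finite, Q : B → ℝ, β > 0, if a probability distribution g on B satisfies ∑_b g(b) Q(b) + β H(g) = β log ∑_b exp(Q(b)/β), then g(b) = exp(Q(b)/β)/∑_{b'} exp(Q(b')/β) for all b. -/
import Mathlib


theorem boltzmann_maximizer_unique {B : Type*} [Fintype B] [Nonempty B]
    (Q : B → ℝ) (β : ℝ) (hβ : 0 < β)
    (g : B → ℝ) (hg0 : ∀ b, 0 ≤ g b) (hg1 : ∑ b, g b = 1)
    (hopt : ∑ b, g b * Q b + β * (-∑ b, g b * Real.log (g b))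
      = β * Real.log (∑ b, Real.exp (Q b / β))) :
    ∀ b, g b = Real.exp (Q b / β) / ∑ b', Real.exp (Q b' / β) := by
  set Z : ℝ := ∑ b', Real.exp (Q b' / β) with hZdef
  have hZpos : 0 < Z :=
    Finset.sum_pos (fun b _ => Real.exp_pos _) Finset.univ_nonempty
  set p : B → ℝ := fun b => Real.exp (Q b / β) / Z with hpdef
  have hppos : ∀ b, 0 < p b := fun b => div_pos (Real.exp_pos _) hZpos
  have hpsum : ∑ b, p b = 1 := by
    simp only [hpdef, ← Finset.sum_div]
    exact div_self hZpos.ne'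
  -- rewrite the cross entropy term
  have h2 : ∑ b, g b * Real.log (p b / g b)
      = ∑ b, (g b * (Q b / β) - g b * Real.log Z - g b * Real.log (g b)) := by
    refine Finset.sum_congr rfl (fun b _ => ?_)
    rcases eq_or_lt_of_le (hg0 b) with h | h
    · simp [← h]
    · rw [Real.log_div (hppos b).ne' h.ne', hpdef]
      rw [Real.log_div (Real.exp_pos _).ne' hZpos.ne', Real.log_exp]
      ring
  have h3 : ∑ b, g b * Real.log (p b / g b) = 0 := by
    rw [h2, Finset.sum_sub_distrib, Finset.sum_sub_distrib, ← Finset.sum_mul, hg1]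
    have hS : ∑ b, g b * (Q b / β) = (∑ b, g b * Q b) / β := by
      rw [Finset.sum_div]
      exact Finset.sum_congr rfl (fun b _ => by ring)
    rw [hS]
    have := hopt
    field_simp
    linarith [hopt]
  have hterm : ∀ b ∈ Finset.univ, 0 ≤ (p b - g b) - g b * Real.log (p b / g b) := by
    intro b _
    rcases eq_or_lt_of_le (hg0 b) with h | h
    · simp [← h]
      exact (hppos b).le
    · have hlog : Real.log (p b / g b) ≤ p b / g b - 1 :=
        Real.log_le_sub_one_of_pos (div_pos (hppos b) h)
      have : g b * Real.log (p b / g b) ≤ g b * (p b / g b - 1) :=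
        mul_le_mul_of_nonneg_left hlog h.le
      have heq : g b * (p b / g b - 1) = p b - g b := by
        field_simp
      linarith [heq ▸ this]
  have hsum0 : ∑ b, ((p b - g b) - g b * Real.log (p b / g b)) = 0 := by
    rw [Finset.sum_sub_distrib, Finset.sum_sub_distrib, hpsum, hg1, h3]
    ring
  have hzero := (Finset.sum_eq_zero_iff_of_nonneg hterm).mp hsum0
  intro b
  have hb := hzero b (Finset.mem_univ b)
  rcases eq_or_lt_of_le (hg0 b) with h | h
  · exfalso
    rw [← h] at hb
    simp at hb
    exact (hppos b).ne' hb
  · by_contra hne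
    have hne' : p b / g b ≠ 1 := by
      intro h1
      exact hne ((div_eq_one_iff_eq h.ne').mp h1).symm
    have hlt : Real.log (p b / g b) < p b / g b - 1 :=
      Real.log_lt_sub_one_of_pos (div_pos (hppos b) h) hne'
    have : g b * Real.log (p b / g b) < g b * (p b / g b - 1) :=
      mul_lt_mul_of_pos_left hlt h
    have heq : g b * (p b / g b - 1) = p b - g b := by
      field_simp
    rw [heq] at this
    linarith
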